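/- A spanning tree T of the intersection graph K_S is a junction tree of CDC(S) if and only if for every edge e of T, the two vertex sets S1 and S2 of the connected components of T - e satisfy (⋃_{S ∈ S1} S) ∩ (⋃_{S ∈ S2} S) ⊆ mid(e). -/

import Mathlib

/-- A junction tree for a labeled collection of finite index sets. -/
def IsJunctionTree {ι α : Type*} [DecidableEq α] (G : SimpleGraph ι)
    (f : ι → Finset α) : Prop :=
  G.IsTree ∧ ∀ (i j : ι) (p : G.Walk i j), p.IsPath →
    (∀ x ∈ p.support, f i ∩ f j ⊆ f x) ∧
    (∀ a b : ι, s(a, b) ∈ p.edges → f i ∩ f j ⊆ f a ∩ f b)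

private lemma walk_split {V : Type*} {G : SimpleGraph V} {i j a b : V}
    (p : G.Walk i j) (hp : p.edges.Nodup) (h : s(a, b) ∈ p.edges) :
    ((G.deleteEdges {s(a, b)}).Reachable a i ∧ (G.deleteEdges {s(a, b)}).Reachable b j) ∨
    ((G.deleteEdges {s(a, b)}).Reachable b i ∧ (G.deleteEdges {s(a, b)}).Reachable a j) := by
  induction p with
  | nil => simp at h
  | @cons u v w h' q ih =>
    rw [SimpleGraph.Walk.edges_cons, List.nodup_cons] at hp
    rw [SimpleGraph.Walk.edges_cons, List.mem_cons] at h
    rcases h with h | h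
    · have hq : s(a, b) ∉ q.edges := h ▸ hp.1
      have hqr : (G.deleteEdges {s(a, b)}).Reachable v w :=
        ⟨q.toDeleteEdge _ hq⟩
      rcases Sym2.eq_iff.mp h.symm with ⟨rfl, rfl⟩ | ⟨rfl, rfl⟩
      · exact Or.inl ⟨SimpleGraph.Reachable.refl _, hqr⟩
      · exact Or.inr ⟨SimpleGraph.Reachable.refl _, hqr⟩
    · have hne : s(u, v) ≠ s(a, b) := fun hh => hp.1 (hh ▸ h)
      have huv : (G.deleteEdges {s(a, b)}).Adj u v := by
        simp only [SimpleGraph.deleteEdges_adj, Set.mem_singleton_iff]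
        exact ⟨h', hne⟩
      rcases ih hp.2 h with ⟨h1, h2⟩ | ⟨h1, h2⟩
      · exact Or.inl ⟨h1.trans huv.reachable.symm, h2⟩
      · exact Or.inr ⟨h1.trans huv.reachable.symm, h2⟩

/-- A spanning tree `T` of the intersection graph `K_𝒮` is a junction
tree of `CDC(𝒮)` iff for every edge `e = s(A, B)` of `T`, the two components of
`T - e` (the vertices reachable from `A`, resp. from `B`, after deleting `e`)
satisfy `(⋃_{S ∈ 𝒮1} S) ∩ (⋃_{S ∈ 𝒮2} S) ⊆ mid(e) = A ∩ B`. -/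
theorem junctionTree_iff_edge_cut_condition {α : Type*} [DecidableEq α]
    (𝒮 : Finset (Finset α)) (T : SimpleGraph {S // S ∈ 𝒮}) (hT : T.IsTree) :
    IsJunctionTree T (fun S => (S : Finset α)) ↔
      ∀ A B : {S // S ∈ 𝒮}, T.Adj A B →
        ∀ x : α,
          (∃ C : {S // S ∈ 𝒮}, (T.deleteEdges {s(A, B)}).Reachable A C ∧ x ∈ (C : Finset α)) →
          (∃ C : {S // S ∈ 𝒮}, (T.deleteEdges {s(A, B)}).Reachable B C ∧ x ∈ (C : Finset α)) →
          x ∈ (A : Finset α) ∩ (B : Finset α) := by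
  constructor
  · rintro ⟨-, hJ⟩ A B hAB x ⟨C, hAC, hxC⟩ ⟨D, hBD, hxD⟩
    have hbridge : T.IsBridge s(A, B) :=
      (SimpleGraph.isAcyclic_iff_forall_adj_isBridge.mp hT.IsAcyclic) hAB
    have hnr : ¬(T.deleteEdges {s(A, B)}).Reachable A B :=
      SimpleGraph.isBridge_iff.mp hbridge
    obtain ⟨p0⟩ := hT.isConnected C D
    set p : T.Path C D := p0.toPath
    by_cases he : s(A, B) ∈ (p : T.Walk C D).edges
    · have := (hJ C D p p.2).2 A B he
      exact this (Finset.mem_inter.mpr ⟨hxC, hxD⟩)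
    · exact absurd (hAC.trans (SimpleGraph.Reachable.trans
        ⟨(p : T.Walk C D).toDeleteEdge _ he⟩ hBD.symm)) hnr
  · intro hcut
    refine ⟨hT, fun i j p hp => ?_⟩
    have hedge : ∀ a b, s(a, b) ∈ p.edges →
        (i : Finset α) ∩ (j : Finset α) ⊆ (a : Finset α) ∩ (b : Finset α) := by
      intro a b hab y hy
      have hadj : T.Adj a b := p.adj_of_mem_edges hab
      obtain ⟨hyi, hyj⟩ := Finset.mem_inter.mp hy
      rcases walk_split p hp.isTrail.edges_nodup hab with ⟨h1, h2⟩ | ⟨h1, h2⟩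
      · exact hcut a b hadj y ⟨i, h1, hyi⟩ ⟨j, h2, hyj⟩
      · have := hcut b a hadj.symm y
          ⟨i, by rw [Sym2.eq_swap]; exact h1, hyi⟩
          ⟨j, by rw [Sym2.eq_swap]; exact h2, hyj⟩
        rw [Finset.inter_comm] at this
        exact this
    refine ⟨fun x hx y hy => ?_, hedge⟩
    by_cases hxi : x = i
    · subst hxi; exact (Finset.mem_inter.mp hy).1
    · have hq := p.takeUntil x hx
      obtain ⟨w, hadj, r, hr⟩ := SimpleGraph.Walk.exists_eq_cons_of_ne
        hxi (p.takeUntil x hx).reverse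
      have hmem : s(x, w) ∈ (p.takeUntil x hx).edges := by
        have : s(x, w) ∈ (p.takeUntil x hx).reverse.edges := by
          rw [hr]; exact List.mem_cons_self
        rwa [SimpleGraph.Walk.edges_reverse, List.mem_reverse] at this
      have : s(x, w) ∈ p.edges := SimpleGraph.Walk.edges_takeUntil_subset p hx hmem
      exact (Finset.mem_inter.mp (hedge x w this hy)).1
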